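/- Let 𝒜_n denote the set of prime numbers of the form ⌊n/k + 1⌋ with k a positive integer satisfying k ≤ √n. Then card 𝒜_n = O(√(n/log n)); that is, there is a constant M > 0 such that for all integers n ≥ 2, the number of elements of 𝒜_n is at most M·√(n/log n). -/

import Mathlib

/-- `𝒜 n` is the set of prime numbers of the form `⌊n/k + 1⌋` for some positive
integer `k` with `k ≤ √n` (here `⌊n/k + 1⌋ = n/k + 1` with natural division). -/
def A (n : ℕ) : Set ℕ :=
  {m : ℕ | m.Prime ∧ ∃ k : ℕ, 0 < k ∧ (k : ℝ) ≤ Real.sqrt n ∧ m = n / k + 1}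

open Finset in
/-- **Proposition 8.** `card 𝒜 n = O(√(n / log n))`: there is `M > 0` such that for
every integer `n ≥ 2`, the number of elements of `𝒜 n` is at most `M √(n / log n)`. -/
theorem card_A_le :
    ∃ M : ℝ, 0 < M ∧ ∀ n : ℕ, 2 ≤ n →
      ((A n).ncard : ℝ) ≤ M * Real.sqrt ((n : ℝ) / Real.log n) := by
  refine ⟨10, by norm_num, ?_⟩
  intro n hn
  set X := Real.sqrt ((n : ℝ) / Real.log n) with hXdef
  have hn2 : (2 : ℝ) ≤ (n : ℝ) := by exact_mod_cast hn
  have hlog2 : (0 : ℝ) < Real.log 2 := Real.log_pos (by norm_num)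
  have hlogn2 : Real.log 2 ≤ Real.log n := Real.log_le_log (by norm_num) hn2
  have hlogpos : 0 < Real.log n := lt_of_lt_of_le hlog2 hlogn2
  have hlogle : Real.log n ≤ (n : ℝ) := by
    have := Real.log_le_sub_one_of_pos (show (0:ℝ) < n by linarith)
    linarith
  have hXpos : 0 < X := Real.sqrt_pos.mpr (by positivity)
  have hXsq : X ^ 2 = (n : ℝ) / Real.log n := Real.sq_sqrt (by positivity)
  have hX1 : 1 ≤ X := by
    rw [hXdef, show (1:ℝ) = Real.sqrt 1 by simp]
    exact Real.sqrt_le_sqrt ((one_le_div hlogpos).mpr hlogle)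
  set t : ℕ := ⌈X⌉₊ with htdef
  have htX : X ≤ t := Nat.le_ceil X
  have htle : (t : ℝ) ≤ X + 1 := (Nat.ceil_lt_add_one hXpos.le).le
  set s := Nat.sqrt n with hsdef
  have hspos : 0 < s := Nat.sqrt_pos.mpr (by omega)
  set Nm : ℕ := n / (t + 1) + 1 with hNmdef
  set G1 : Finset ℕ := (Icc 1 t).image (fun k => n / k + 1) with hG1
  set G2 : Finset ℕ := ((Icc (t + 1) s).image (fun k => n / k + 1)).filter Nat.Prime with hG2
  -- A n ⊆ G1 ∪ G2
  have hsub : A n ⊆ ↑(G1 ∪ G2) := by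
    rintro m ⟨hp, k, hk0, hks, rfl⟩
    have hks' : k ≤ s := by
      have h := Nat.le_floor hks
      rwa [Real.nat_floor_real_sqrt_eq_nat_sqrt] at h
    rw [Finset.mem_coe, mem_union]
    by_cases hkt : k ≤ t
    · exact Or.inl (mem_image.mpr ⟨k, mem_Icc.mpr ⟨hk0, hkt⟩, rfl⟩)
    · exact Or.inr (mem_filter.mpr ⟨mem_image.mpr ⟨k, mem_Icc.mpr ⟨by omega, hks'⟩, rfl⟩, hp⟩)
  have hfin : ((G1 ∪ G2 : Finset ℕ) : Set ℕ).Finite := (G1 ∪ G2).finite_toSet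
  have hcard1 : (A n).ncard ≤ G1.card + G2.card := by
    calc (A n).ncard ≤ ((G1 ∪ G2 : Finset ℕ) : Set ℕ).ncard :=
          Set.ncard_le_ncard hsub hfin
      _ = (G1 ∪ G2).card := Set.ncard_coe_finset _
      _ ≤ G1.card + G2.card := card_union_le _ _
  have hG1card : G1.card ≤ t := by
    calc G1.card ≤ (Icc 1 t).card := card_image_le
      _ = t := by simp
  -- Large part: every p ∈ G2 is prime, s + 1 ≤ p ≤ Nm
  have hG2mem : ∀ p ∈ G2, p.Prime ∧ s + 1 ≤ p ∧ p ≤ Nm := by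
    intro p hp
    rw [hG2, mem_filter] at hp
    obtain ⟨hp1, hp2⟩ := hp
    obtain ⟨k, hk, rfl⟩ := mem_image.mp hp1
    rw [mem_Icc] at hk
    refine ⟨hp2, ?_, ?_⟩
    · have hss : s * s ≤ n := by have h := Nat.sqrt_le' n; rwa [pow_two] at h
      have hsk : s ≤ n / k := by
        have hkpos : 0 < k := by omega
        refine Nat.le_div_iff_mul_le hkpos |>.mpr ?_
        calc s * k ≤ s * s := Nat.mul_le_mul_left s hk.2
          _ ≤ n := hss
      omega
    · have : n / k ≤ n / (t + 1) := Nat.div_le_div_left hk.1 (by omega)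
      omega
  -- (s+1)^|G2| ≤ 4^Nm
  have hprod : (s + 1) ^ G2.card ≤ 4 ^ Nm := by
    calc (s + 1) ^ G2.card ≤ ∏ p ∈ G2, p :=
          Finset.pow_card_le_prod _ _ _ (fun p hp => (hG2mem p hp).2.1)
      _ ≤ ∏ p ∈ (range (Nm + 1)).filter Nat.Prime, p := by
          refine Finset.prod_le_prod_of_subset_of_one_le' ?_ ?_
          · intro p hp
            rw [mem_filter, mem_range]
            exact ⟨by have := (hG2mem p hp).2.2; omega, (hG2mem p hp).1⟩
          · intro p hp _
            exact (Nat.Prime.one_lt (mem_filter.mp hp).2).le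
      _ = primorial Nm := rfl
      _ ≤ 4 ^ Nm := primorial_le_4_pow Nm
  -- pass to reals, take logs
  have hlogineq : (G2.card : ℝ) * (Real.log n / 2) ≤ (Nm : ℝ) * Real.log 4 := by
    have h1 : ((s : ℝ) + 1) ^ G2.card ≤ (4 : ℝ) ^ Nm := by exact_mod_cast hprod
    have h2 := Real.log_le_log (by positivity) h1
    rw [Real.log_pow, Real.log_pow] at h2
    have h3 : Real.log n / 2 ≤ Real.log ((s : ℝ) + 1) := by
      rw [← Real.log_sqrt (by positivity)]
      exact Real.log_le_log (Real.sqrt_pos.mpr (by positivity))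
        Real.real_sqrt_le_nat_sqrt_succ
    calc (G2.card : ℝ) * (Real.log n / 2) ≤ (G2.card : ℝ) * Real.log ((s:ℝ)+1) := by
          exact mul_le_mul_of_nonneg_left h3 (by positivity)
      _ ≤ (Nm : ℝ) * Real.log 4 := h2
  have hNmle : (Nm : ℝ) ≤ X * Real.log n + 1 := by
    have h1 : ((n / (t+1) : ℕ) : ℝ) ≤ (n : ℝ) / ((t:ℝ) + 1) := by
      have := Nat.cast_div_le (m := n) (n := t + 1) (α := ℝ)
      push_cast at this ⊢
      exact this
    have h2 : (n : ℝ) / ((t:ℝ) + 1) ≤ (n : ℝ) / X := by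
      apply div_le_div_of_nonneg_left (by positivity) hXpos
      linarith
    have hneq : (n : ℝ) = X ^ 2 * Real.log n := by
      rw [hXsq]; field_simp
    have h3 : (n : ℝ) / X = X * Real.log n := by
      rw [eq_comm, eq_div_iff hXpos.ne']
      linear_combination -hneq
    have : (Nm : ℝ) = ((n / (t+1) : ℕ) : ℝ) + 1 := by push_cast [hNmdef]; ring
    rw [this, ← h3]
    linarith
  -- combine
  have hlog4 : Real.log 4 = 2 * Real.log 2 := by
    rw [show (4:ℝ) = 2^2 by norm_num, Real.log_pow]; push_cast; ring
  have hc : (G2.card : ℝ) ≤ 4 * Real.log 2 * X + 4 := by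
    have h1 : (G2.card : ℝ) * (Real.log n / 2) ≤ (X * Real.log n + 1) * Real.log 4 := by
      refine hlogineq.trans (mul_le_mul_of_nonneg_right hNmle (by positivity))
    rw [hlog4] at h1
    have hA : (G2.card : ℝ) * Real.log n ≤ (4 * Real.log 2 * X + 4) * Real.log n := by
      nlinarith [h1, hlogn2]
    exact (mul_le_mul_iff_left₀ hlogpos).mp hA
  have hlt : Real.log 2 < 0.6931471808 := Real.log_two_lt_d9
  have hfinal : ((A n).ncard : ℝ) ≤ (t : ℝ) + (G2.card : ℝ) := by
    calc ((A n).ncard : ℝ) ≤ ((G1.card + G2.card : ℕ) : ℝ) := by exact_mod_cast hcard1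
      _ ≤ (t : ℝ) + G2.card := by
          push_cast
          have h := (Nat.cast_le (α := ℝ)).mpr hG1card
          linarith
  calc ((A n).ncard : ℝ) ≤ (t : ℝ) + (G2.card : ℝ) := hfinal
    _ ≤ (X + 1) + (4 * Real.log 2 * X + 4) := by linarith
    _ ≤ 10 * X := by nlinarith
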